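/- Fix a linear subspace L of the space of symmetric n×n real matrices with orthogonal complement L^⊥ relative to the trace inner product ⟨A,B⟩ = tr(A·B), symmetric matrices X₀, S₀, and μ > 0. Let W and Ŵ be symmetric positive definite with Ŵ ∈ (1/√μ)·X₀ + L and Ŵ⁻¹ ∈ (1/√μ)·S₀ + L^⊥. Let D be symmetric with W^(1/2)·(I + D)·W^(1/2) ∈ (1/√μ)·X₀ + L and W^(-1/2)·(I − D)·W^(-1/2) ∈ (1/√μ)·S₀ + L^⊥, and suppose D = D₁ − D₂ where D₁ and D₂ are symmetric, D₂ ∈ L_W := {W^(-1/2)·Z·W^(-1/2) : Z ∈ L}, and tr(D₁·M) = 0 for every M ∈ L_W. Then, with h := tr(W·Ŵ⁻¹) + tr(W⁻¹·Ŵ) − 2n: (a) h·(1 + ‖D₁ + D₂‖_∞) ≥ tr(D²), and (b) if ‖D₁ + D₂‖_∞ < 1 then h·(1 − ‖D₁ + D₂‖_∞) ≤ tr(D²). -/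

import Mathlib

open Matrix

/-- The spectral norm of a real symmetric matrix: the maximum absolute value
of its eigenvalues. -/
noncomputable def specNormInf {n : ℕ} {D : Matrix (Fin n) (Fin n) ℝ}
    (hD : D.IsHermitian) : ℝ :=
  ⨆ i, |hD.eigenvalues i|

private lemma psd_diag_nonneg {n : ℕ} {M : Matrix (Fin n) (Fin n) ℝ}
    (hM : M.PosSemidef) (i : Fin n) : 0 ≤ M i i := by
  exact hM.diag_nonneg

private lemma abs_trace_mul_le {n : ℕ} [Nonempty (Fin n)] {E M : Matrix (Fin n) (Fin n) ℝ}
    (hE : E.IsHermitian) (hM : M.PosSemidef) :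
    |(E * M).trace| ≤ (⨆ i, |hE.eigenvalues i|) * M.trace := by
  set c := ⨆ i, |hE.eigenvalues i| with hc
  have hbdd : BddAbove (Set.range fun i => |hE.eigenvalues i|) :=
    Set.Finite.bddAbove (Set.finite_range _)
  have hcle : ∀ i, |hE.eigenvalues i| ≤ c := fun i => le_ciSup hbdd i
  set U : Matrix (Fin n) (Fin n) ℝ := (hE.eigenvectorUnitary : Matrix (Fin n) (Fin n) ℝ) with hU
  set N : Matrix (Fin n) (Fin n) ℝ := star U * M * U with hN
  have hNps : N.PosSemidef := by
    have := hM.conjTranspose_mul_mul_same (B := U)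
    rwa [← Matrix.star_eq_conjTranspose] at this
  have hUU : U * star U = 1 := Unitary.coe_mul_star_self hE.eigenvectorUnitary
  have hd : (RCLike.ofReal ∘ hE.eigenvalues : Fin n → ℝ) = hE.eigenvalues := by
    ext i; simp
  have key : (E * M).trace = (Matrix.diagonal hE.eigenvalues * N).trace := by
    conv_lhs => rw [hE.spectral_theorem, hd, Unitary.conjStarAlgAut_apply]
    rw [Matrix.mul_assoc, Matrix.mul_assoc, Matrix.trace_mul_comm, hN]
    congr 1
    simp only [Matrix.mul_assoc]
    rfl
  have hdiag : (Matrix.diagonal hE.eigenvalues * N).trace = ∑ i, hE.eigenvalues i * N i i := by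
    simp [Matrix.trace, Matrix.diag, Matrix.diagonal_mul]
  have htrN : ∑ i, N i i = M.trace := by
    have : N.trace = M.trace := by
      rw [hN, Matrix.trace_mul_cycle, hUU, Matrix.one_mul]
    simpa [Matrix.trace, Matrix.diag] using this
  rw [key, hdiag]
  calc |∑ i, hE.eigenvalues i * N i i| ≤ ∑ i, |hE.eigenvalues i * N i i| :=
        Finset.abs_sum_le_sum_abs _ _
    _ ≤ ∑ i, c * N i i := by
        refine Finset.sum_le_sum fun i _ => ?_
        rw [abs_mul, abs_of_nonneg (psd_diag_nonneg hNps i)]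
        exact mul_le_mul_of_nonneg_right (hcle i) (psd_diag_nonneg hNps i)
    _ = c * M.trace := by rw [← Finset.mul_sum, htrN]

/-- The positive semidefinite square root of a positive semidefinite matrix
(the definition of `Matrix.PosSemidef.sqrt` in the older Mathlib, which no longer exists). -/
noncomputable def posSemidefSqrt {n : ℕ} {A : Matrix (Fin n) (Fin n) ℝ} (hA : A.PosSemidef) :
    Matrix (Fin n) (Fin n) ℝ :=
  hA.isHermitian.eigenvectorUnitary.1 * diagonal ((↑) ∘ (√·) ∘ hA.isHermitian.eigenvalues) *
    (star hA.isHermitian.eigenvectorUnitary : Matrix (Fin n) (Fin n) ℝ)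

private lemma posSemidefSqrt_psd {n : ℕ} {A : Matrix (Fin n) (Fin n) ℝ} (hA : A.PosSemidef) :
    (posSemidefSqrt hA).PosSemidef := by
  unfold posSemidefSqrt
  rw [Matrix.star_eq_conjTranspose]
  apply PosSemidef.mul_mul_conjTranspose_same
  rw [posSemidef_diagonal_iff]
  intro i
  simp [Real.sqrt_nonneg]

private lemma posSemidefSqrt_mul_self {n : ℕ} {A : Matrix (Fin n) (Fin n) ℝ}
    (hA : A.PosSemidef) : posSemidefSqrt hA * posSemidefSqrt hA = A := by
  unfold posSemidefSqrt
  have hsu : star (hA.isHermitian.eigenvectorUnitary : Matrix (Fin n) (Fin n) ℝ) * (hA.isHermitian.eigenvectorUnitary : Matrix (Fin n) (Fin n) ℝ)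
      = 1 := Unitary.coe_star_mul_self _
  have hc : ∀ X Y : Matrix (Fin n) (Fin n) ℝ,
      hA.isHermitian.eigenvectorUnitary.1 * X *
        (star hA.isHermitian.eigenvectorUnitary : Matrix (Fin n) (Fin n) ℝ) *
      (hA.isHermitian.eigenvectorUnitary.1 * Y *
        (star hA.isHermitian.eigenvectorUnitary : Matrix (Fin n) (Fin n) ℝ)) =
      hA.isHermitian.eigenvectorUnitary.1 * (X * Y) *
        (star hA.isHermitian.eigenvectorUnitary : Matrix (Fin n) (Fin n) ℝ) := by
    intro X Y
    simp only [Matrix.mul_assoc]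
    rw [← Matrix.mul_assoc _ (hA.isHermitian.eigenvectorUnitary : Matrix (Fin n) (Fin n) ℝ), hsu,
      Matrix.one_mul]
  rw [hc, diagonal_mul_diagonal]
  conv_rhs => rw [hA.isHermitian.spectral_theorem, Unitary.conjStarAlgAut_apply]
  congr 3
  ext i
  simp [Real.mul_self_sqrt (hA.eigenvalues_nonneg i)]

/-- Computable divergence bounds from the Newton direction: with `D = D₁ - D₂`
the orthogonal decomposition of the Newton direction at `(W, μ)` relative to
`L_W = {W^(-1/2) Z W^(-1/2) : Z ∈ L}`, `Wc` the scaled centered point, and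
`h = tr (W Wc⁻¹) + tr (W⁻¹ Wc) - 2n` the divergence, one has
(a) `h (1 + ‖D₁ + D₂‖_∞) ≥ tr (D²)`, and
(b) if `‖D₁ + D₂‖_∞ < 1` then `h (1 - ‖D₁ + D₂‖_∞) ≤ tr (D²)`. -/
theorem divergence_bounds_from_newton_direction
    (n : ℕ) (hn : 1 ≤ n)
    (L : Submodule ℝ (Matrix (Fin n) (Fin n) ℝ))
    (hL : ∀ A ∈ L, A.IsHermitian)
    (Lp : Submodule ℝ (Matrix (Fin n) (Fin n) ℝ))
    (hLp : ∀ B, B ∈ Lp ↔ (B.IsHermitian ∧ ∀ A ∈ L, (A * B).trace = 0))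
    (X₀ S₀ : Matrix (Fin n) (Fin n) ℝ) (hX₀ : X₀.IsHermitian) (hS₀ : S₀.IsHermitian)
    (μ : ℝ) (hμ : 0 < μ)
    (W Wc : Matrix (Fin n) (Fin n) ℝ) (hW : W.PosDef) (hWc : Wc.PosDef)
    (hWc1 : Wc - (1 / Real.sqrt μ) • X₀ ∈ L)
    (hWc2 : Wc⁻¹ - (1 / Real.sqrt μ) • S₀ ∈ Lp)
    (D : Matrix (Fin n) (Fin n) ℝ) (hD : D.IsHermitian)
    (hD1' : posSemidefSqrt hW.posSemidef * (1 + D) * posSemidefSqrt hW.posSemidef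
            - (1 / Real.sqrt μ) • X₀ ∈ L)
    (hD2' : (posSemidefSqrt hW.posSemidef)⁻¹ * (1 - D) * (posSemidefSqrt hW.posSemidef)⁻¹
            - (1 / Real.sqrt μ) • S₀ ∈ Lp)
    (D₁ D₂ : Matrix (Fin n) (Fin n) ℝ)
    (hD₁ : D₁.IsHermitian) (hD₂ : D₂.IsHermitian)
    (hsum : D = D₁ - D₂)
    (hD₂mem : ∃ Z ∈ L, D₂ = (posSemidefSqrt hW.posSemidef)⁻¹ * Z * (posSemidefSqrt hW.posSemidef)⁻¹)
    (hD₁orth : ∀ Z ∈ L,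
      (D₁ * ((posSemidefSqrt hW.posSemidef)⁻¹ * Z * (posSemidefSqrt hW.posSemidef)⁻¹)).trace = 0)
    (h : ℝ)
    (hh : h = (W * Wc⁻¹).trace + (W⁻¹ * Wc).trace - 2 * n) :
    h * (1 + specNormInf (hD₁.add hD₂)) ≥ (D * D).trace ∧
      (specNormInf (hD₁.add hD₂) < 1 →
        h * (1 - specNormInf (hD₁.add hD₂)) ≤ (D * D).trace) := by
  haveI : Nonempty (Fin n) := ⟨⟨0, hn⟩⟩
  classical
  set V : Matrix (Fin n) (Fin n) ℝ := posSemidefSqrt hW.posSemidef with hVdef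
  have hVps : V.PosSemidef := posSemidefSqrt_psd hW.posSemidef
  have hVH : V.IsHermitian := hVps.isHermitian
  have hVV : V * V = W := posSemidefSqrt_mul_self hW.posSemidef
  have hVdet : IsUnit V.det := by
    refine isUnit_iff_ne_zero.mpr fun h0 => ?_
    have h1 : V.det * V.det = W.det := by rw [← Matrix.det_mul, hVV]
    rw [h0, mul_zero] at h1
    exact (ne_of_gt hW.det_pos) h1.symm
  have hVl : V⁻¹ * V = 1 := Matrix.nonsing_inv_mul V hVdet
  have hVr : V * V⁻¹ = 1 := Matrix.mul_nonsing_inv V hVdet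
  have hVl' : ∀ X : Matrix (Fin n) (Fin n) ℝ, V⁻¹ * (V * X) = X := fun X => by
    rw [← Matrix.mul_assoc, hVl, Matrix.one_mul]
  have hVr' : ∀ X : Matrix (Fin n) (Fin n) ℝ, V * (V⁻¹ * X) = X := fun X => by
    rw [← Matrix.mul_assoc, hVr, Matrix.one_mul]
  have hCdet : IsUnit Wc.det := isUnit_iff_ne_zero.mpr (ne_of_gt hWc.det_pos)
  have hCl : Wc⁻¹ * Wc = 1 := Matrix.nonsing_inv_mul Wc hCdet
  have hCr : Wc * Wc⁻¹ = 1 := Matrix.mul_nonsing_inv Wc hCdet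
  have hCl' : ∀ X : Matrix (Fin n) (Fin n) ℝ, Wc⁻¹ * (Wc * X) = X := fun X => by
    rw [← Matrix.mul_assoc, hCl, Matrix.one_mul]
  have hCr' : ∀ X : Matrix (Fin n) (Fin n) ℝ, Wc * (Wc⁻¹ * X) = X := fun X => by
    rw [← Matrix.mul_assoc, hCr, Matrix.one_mul]
  have hWinv : W⁻¹ = V⁻¹ * V⁻¹ := by rw [← hVV, Matrix.mul_inv_rev]
  have hVinvH : (V⁻¹).IsHermitian := hVH.inv
  set P : Matrix (Fin n) (Fin n) ℝ := V⁻¹ * Wc * V⁻¹ with hP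
  set Q : Matrix (Fin n) (Fin n) ℝ := V * Wc⁻¹ * V with hQ
  set G : Matrix (Fin n) (Fin n) ℝ := P - (1 + D) with hG
  set H : Matrix (Fin n) (Fin n) ℝ := Q - (1 - D) with hH
  have hPQ1 : P * Q = 1 := by
    rw [hP, hQ]
    simp only [Matrix.mul_assoc, hVl', hVr', hCl', hCr', hVl, hVr, hCl, hCr]
  have htrP : P.trace = (W⁻¹ * Wc).trace := by
    rw [hP, Matrix.trace_mul_cycle, ← hWinv]
  have htrQ : Q.trace = (W * Wc⁻¹).trace := by
    rw [hQ, Matrix.trace_mul_cycle, hVV]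
  -- membership of the conjugated pieces
  set ZG : Matrix (Fin n) (Fin n) ℝ := Wc - V * (1 + D) * V with hZGdef
  have hZG : ZG ∈ L := by
    have h' := sub_mem hWc1 hD1'
    rwa [sub_sub_sub_cancel_right] at h'
  have hGZ : G = V⁻¹ * ZG * V⁻¹ := by
    rw [hG, hZGdef, hP, Matrix.mul_sub, Matrix.sub_mul]
    congr 1
    simp only [Matrix.mul_assoc, hVl', hVr', hVl, hVr, Matrix.mul_one, mul_one]
  set BH : Matrix (Fin n) (Fin n) ℝ := Wc⁻¹ - V⁻¹ * (1 - D) * V⁻¹ with hBHdef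
  have hBH : BH ∈ Lp := by
    have h' := sub_mem hWc2 hD2'
    rwa [sub_sub_sub_cancel_right] at h'
  have hHB : H = V * BH * V := by
    rw [hH, hBHdef, hQ, Matrix.mul_sub, Matrix.sub_mul]
    congr 1
    simp only [Matrix.mul_assoc, hVl', hVr', hVl, hVr, Matrix.mul_one, mul_one]
  -- conjugation-invariance of traces
  have trconj : ∀ Z B : Matrix (Fin n) (Fin n) ℝ,
      ((V⁻¹ * Z * V⁻¹) * (V * B * V)).trace = (Z * B).trace := by
    intro Z B
    have e : (V⁻¹ * Z * V⁻¹) * (V * B * V) = V⁻¹ * (Z * B * V) := by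
      simp only [Matrix.mul_assoc, hVl', hVr', hVl, hVr]
    rw [e, Matrix.trace_mul_comm, Matrix.mul_assoc, hVr, Matrix.mul_one]
  -- orthogonality trace facts
  have trGD₁ : (G * D₁).trace = 0 := by
    rw [Matrix.trace_mul_comm, hGZ]
    exact hD₁orth ZG hZG
  obtain ⟨Z', hZ', hD₂eq⟩ := hD₂mem
  have trHD₂ : (H * D₂).trace = 0 := by
    rw [Matrix.trace_mul_comm, hD₂eq, hHB, trconj]
    exact ((hLp BH).mp hBH).2 Z' hZ'
  have trGH : (G * H).trace = 0 := by
    rw [hGZ, hHB, trconj]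
    exact ((hLp BH).mp hBH).2 ZG hZG
  -- the main algebraic identity
  have hPsplit : P = (1 + D) + G := by rw [hG]; abel
  have hQsplit : Q = (1 - D) + H := by rw [hH]; abel
  have e : P * Q + D * D + G * D = 1 + H + D * H + G + G * H := by
    rw [hPsplit, hQsplit]; noncomm_ring
  have et := congrArg Matrix.trace e
  simp only [Matrix.trace_add] at et
  have hPQtr : (P * Q).trace = (n : ℝ) := by
    rw [hPQ1, Matrix.trace_one]; simp [Fintype.card_fin]
  have tDH : (D * H).trace = (D₁ * H).trace := by
    rw [hsum, Matrix.sub_mul, Matrix.trace_sub, Matrix.trace_mul_comm D₂ H, trHD₂, sub_zero]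
  have tGD : (G * D).trace = -(G * D₂).trace := by
    rw [hsum, Matrix.mul_sub, Matrix.trace_sub, trGD₁, zero_sub]
  have tE : ((D₁ + D₂) * (G + H)).trace = (D₁ * H).trace + (G * D₂).trace := by
    rw [Matrix.add_mul, Matrix.mul_add, Matrix.mul_add, Matrix.trace_add, Matrix.trace_add,
      Matrix.trace_add, Matrix.trace_mul_comm D₁ G, trGD₁, Matrix.trace_mul_comm D₂ H, trHD₂,
      Matrix.trace_mul_comm D₂ G]
    ring
  -- positive semidefiniteness of G + H
  have hPps : P.PosSemidef := by
    have h0 := hWc.posSemidef.conjTranspose_mul_mul_same (B := V⁻¹)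
    rw [show (V⁻¹)ᴴ = V⁻¹ from hVinvH] at h0
    rwa [← hP] at h0
  have hRR : (posSemidefSqrt hPps) * (posSemidefSqrt hPps) = P := posSemidefSqrt_mul_self hPps
  have hRH : ((posSemidefSqrt hPps)).IsHermitian := (posSemidefSqrt_psd hPps).isHermitian
  have hPdet : IsUnit P.det := by
    have h1 := congrArg Matrix.det hPQ1
    rw [Matrix.det_mul, Matrix.det_one] at h1
    exact IsUnit.of_mul_eq_one _ h1
  have hRdet : IsUnit ((posSemidefSqrt hPps)).det := by
    have h1 : ((posSemidefSqrt hPps)).det * ((posSemidefSqrt hPps)).det = P.det := by rw [← Matrix.det_mul, hRR]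
    rw [← h1] at hPdet
    exact isUnit_of_mul_isUnit_left hPdet
  have hRl : ((posSemidefSqrt hPps))⁻¹ * (posSemidefSqrt hPps) = 1 := Matrix.nonsing_inv_mul _ hRdet
  have hRr : (posSemidefSqrt hPps) * ((posSemidefSqrt hPps))⁻¹ = 1 := Matrix.mul_nonsing_inv _ hRdet
  have hRinv2 : ((posSemidefSqrt hPps))⁻¹ * ((posSemidefSqrt hPps))⁻¹ = Q := by
    have h2 : ((posSemidefSqrt hPps) * (posSemidefSqrt hPps)) * (((posSemidefSqrt hPps))⁻¹ * ((posSemidefSqrt hPps))⁻¹) = 1 := by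
      rw [Matrix.mul_assoc, ← Matrix.mul_assoc (posSemidefSqrt hPps) ((posSemidefSqrt hPps))⁻¹, hRr,
        Matrix.one_mul, hRr]
    rw [hRR] at h2
    exact Matrix.right_inv_eq_right_inv h2 hPQ1
  set K : Matrix (Fin n) (Fin n) ℝ := (posSemidefSqrt hPps) - ((posSemidefSqrt hPps))⁻¹ with hK
  have hKH : Kᴴ = K := by
    rw [hK, Matrix.conjTranspose_sub, show ((posSemidefSqrt hPps))ᴴ = (posSemidefSqrt hPps) from hRH,
      show (((posSemidefSqrt hPps))⁻¹)ᴴ = ((posSemidefSqrt hPps))⁻¹ from hRH.inv]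
  have hKK : K * K = G + H := by
    rw [hK, Matrix.sub_mul, Matrix.mul_sub, Matrix.mul_sub, hRR, hRr, hRl, hRinv2, hG, hH]
    abel
  have hGHps : (G + H).PosSemidef := by
    have h0 := Matrix.posSemidef_conjTranspose_mul_self K
    rwa [hKH, hKK] at h0
  -- trace of G + H equals h
  have htrGH : (G + H).trace = h := by
    have t1 : (G + H).trace = P.trace + Q.trace - 2 * n := by
      rw [hG, hH]
      simp [Matrix.trace_sub, Matrix.trace_add, Matrix.trace_one, Fintype.card_fin]
      ring
    rw [t1, htrP, htrQ, hh]; ring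
  -- spectral bound
  have hbound := abs_trace_mul_le (hD₁.add hD₂) hGHps
  rw [htrGH, tE] at hbound
  have hceq : specNormInf (hD₁.add hD₂) = ⨆ i, |(hD₁.add hD₂).eigenvalues i| := rfl
  rw [← hceq] at hbound
  rw [abs_le] at hbound
  -- the scalar identity: tr(D²) = h + (t₁ + t₂)
  have hDD : (D * D).trace = h + ((D₁ * H).trace + (G * D₂).trace) := by
    have hGHtr : G.trace + H.trace = h := by rw [← Matrix.trace_add, htrGH]
    rw [hPQtr, tDH, tGD] at et
    have htr1 : (1 : Matrix (Fin n) (Fin n) ℝ).trace = (n : ℝ) := by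
      rw [Matrix.trace_one]; simp [Fintype.card_fin]
    rw [htr1, trGH] at et
    linarith
  constructor
  · nlinarith [hbound.1, hbound.2]
  · intro _
    nlinarith [hbound.1, hbound.2]
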